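/- Let C be a non-trivial strongly connected component in BPA*01, let p ∈ C, and let q be a BPA*01 expression such that C·q is a strongly connected component. Then p·q is an alive exit state of C·q if and only if p is an alive exit state of C and q is normed. -/
import Mathlib


/-- BPA*01 expressions over an action set `Act`. -/
inductive BExpr (Act : Type) : Type
  | dl : BExpr Act
  | emp : BExpr Act
  | act : Act → BExpr Act
  | seq : BExpr Act → BExpr Act → BExpr Act
  | alt : BExpr Act → BExpr Act → BExpr Act
  | star : BExpr Act → BExpr Act

variable {Act : Type}

/-- The termination predicate `↓` of BPA*01. -/
inductive BTerm : BExpr Act → Prop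
  | emp : BTerm BExpr.emp
  | altl {p q : BExpr Act} : BTerm p → BTerm (BExpr.alt p q)
  | altr {p q : BExpr Act} : BTerm q → BTerm (BExpr.alt p q)
  | seq {p q : BExpr Act} : BTerm p → BTerm q → BTerm (BExpr.seq p q)
  | star {p : BExpr Act} : BTerm (BExpr.star p)

/-- The transition relation `p →a p'` of BPA*01. -/
inductive BStep : BExpr Act → Act → BExpr Act → Prop
  | act {a : Act} : BStep (BExpr.act a) a BExpr.emp
  | altl {p q p' : BExpr Act} {a : Act} : BStep p a p' → BStep (BExpr.alt p q) a p'
  | altr {p q q' : BExpr Act} {a : Act} : BStep q a q' → BStep (BExpr.alt p q) a q'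
  | seql {p q p' : BExpr Act} {a : Act} :
      BStep p a p' → BStep (BExpr.seq p q) a (BExpr.seq p' q)
  | seqr {p q q' : BExpr Act} {a : Act} :
      BTerm p → BStep q a q' → BStep (BExpr.seq p q) a q'
  | star {p p' : BExpr Act} {a : Act} :
      BStep p a p' → BStep (BExpr.star p) a (BExpr.seq p' (BExpr.star p))

/-- `p → p'`: a transition with some label. -/
def BStepAny (p q : BExpr Act) : Prop := ∃ a, BStep p a q

/-- `p →* p'`: reachability. -/
def BReach (p q : BExpr Act) : Prop := Relation.ReflTransGen BStepAny p q

/-- `p` is normed: some terminating expression is reachable from `p`. -/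
def BNormed (p : BExpr Act) : Prop := ∃ q, BReach p q ∧ BTerm q

/-- A strongly connected component: a maximal set of mutually reachable states. -/
def IsSCC (C : Set (BExpr Act)) : Prop :=
  (∀ s ∈ C, ∀ t ∈ C, BReach s t) ∧
    ∀ D : Set (BExpr Act), C ⊆ D → (∀ s ∈ D, ∀ t ∈ D, BReach s t) → D = C

/-- A trivial SCC: a singleton `{s}` with no transition `s → s`. -/
def IsTrivialSCC (C : Set (BExpr Act)) : Prop := ∃ s, C = {s} ∧ ¬ BStepAny s s

/-- `C · q = { p · q | p ∈ C }`. -/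
def seqSet (C : Set (BExpr Act)) (q : BExpr Act) : Set (BExpr Act) :=
  (fun p => BExpr.seq p q) '' C

/-- A basic SCC: `C = C' · q*` for some set `C'` that is not an SCC. -/
def IsBasic (C : Set (BExpr Act)) : Prop :=
  ∃ (C' : Set (BExpr Act)) (q : BExpr Act), C = seqSet C' (BExpr.star q) ∧ ¬ IsSCC C'

/-- The set `Extⁿ(s)` of normed exit transitions from `s`, w.r.t. the SCC `C`. -/
def ExtN (C : Set (BExpr Act)) (s : BExpr Act) : Set (Act × BExpr Act) :=
  {e | BStep s e.1 e.2 ∧ e.2 ∉ C ∧ BNormed e.2}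

/-- `s ∈ C` is an alive exit state if `s↓` or `s` has a normed exit transition. -/
def AliveExit (C : Set (BExpr Act)) (s : BExpr Act) : Prop :=
  s ∈ C ∧ (BTerm s ∨ ∃ e, e ∈ ExtN C s)

/-- `E · q = { (a, r · q) | (a, r) ∈ E }`. -/
def extSeq (E : Set (Act × BExpr Act)) (q : BExpr Act) : Set (Act × BExpr Act) :=
  (fun e => (e.1, BExpr.seq e.2 q)) '' E

/-- Is the expression a star expression? -/
def isStarB : BExpr Act → Bool
  | BExpr.star _ => true
  | _ => false

/-- The measure `OC` on BPA*01 expressions. -/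
def OC : BExpr Act → ℕ
  | BExpr.dl => 0
  | BExpr.emp => 0
  | BExpr.act _ => 1
  | BExpr.seq _ q => if isStarB q then 0 else OC q + 1
  | BExpr.alt p q => max (OC p) (OC q) + 1
  | BExpr.star _ => 1

lemma bstep_oc_le {p p' : BExpr Act} {a : Act} (h : BStep p a p') : OC p' ≤ OC p := by
  induction h with
  | act => simp [OC]
  | altl _ ih => simp only [OC]; omega
  | altr _ ih => simp only [OC]; omega
  | seql _ _ => simp [OC]
  | seqr _ hs ih =>
    rename_i pp qq q' a hterm
    cases hq : isStarB qq
    · simp only [OC, hq, Bool.false_eq_true, if_false]; omega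
    · cases qq <;> simp [isStarB] at hq
      cases hs
      simp [OC, isStarB]
  | star _ _ => simp [OC, isStarB]

lemma breach_seq_left {u u' : BExpr Act} (h : BReach u u') (v : BExpr Act) :
    BReach (BExpr.seq u v) (BExpr.seq u' v) := by
  induction h with
  | refl => exact Relation.ReflTransGen.refl
  | tail _ hs ih => exact ih.tail ⟨hs.choose, BStep.seql hs.choose_spec⟩

lemma bnormed_of_reach {p p' : BExpr Act} (h : BReach p p') (h' : BNormed p') : BNormed p := by
  obtain ⟨r, hr, ht⟩ := h'
  exact ⟨r, h.trans hr, ht⟩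

lemma bnormed_seq {u v : BExpr Act} (hu : BNormed u) (hv : BNormed v) :
    BNormed (BExpr.seq u v) := by
  obtain ⟨t, hut, htt⟩ := hu
  obtain ⟨s, hvs, hst⟩ := hv
  refine bnormed_of_reach (breach_seq_left hut v) ?_
  rcases hvs.cases_head with rfl | ⟨c, ⟨a, hs⟩, hrest⟩
  · exact ⟨BExpr.seq t v, Relation.ReflTransGen.refl, BTerm.seq htt hst⟩
  · exact ⟨s, Relation.ReflTransGen.head ⟨a, BStep.seqr htt hs⟩ hrest, hst⟩

lemma seq_reach_term {s r : BExpr Act} (h : BReach s r) (hr : BTerm r) :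
    ∀ u v, s = BExpr.seq u v → BNormed u ∧ BNormed v := by
  induction h using Relation.ReflTransGen.head_induction_on with
  | refl =>
    rintro u v rfl
    cases hr with
    | seq h1 h2 =>
      exact ⟨⟨u, Relation.ReflTransGen.refl, h1⟩, ⟨v, Relation.ReflTransGen.refl, h2⟩⟩
  | head hstep hrest ih =>
    rintro u v rfl
    obtain ⟨a, hs⟩ := hstep
    cases hs with
    | seql h1 =>
      obtain ⟨hu', hv⟩ := ih _ _ rfl
      exact ⟨bnormed_of_reach (Relation.ReflTransGen.single ⟨a, h1⟩) hu', hv⟩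
    | seqr h1 h2 =>
      exact ⟨⟨u, Relation.ReflTransGen.refl, h1⟩,
        bnormed_of_reach (Relation.ReflTransGen.single ⟨a, h2⟩) ⟨r, hrest, hr⟩⟩

/-- Let `C` be a non-trivial SCC in BPA*01, `p ∈ C`, and `q` such
that `C · q` is an SCC. Then `p · q` is an alive exit state of `C · q` iff `p`
is an alive exit state of `C` and `q` is normed. -/
theorem seq_alive_exit {Act : Type} [Nonempty Act] {C : Set (BExpr Act)}
    (hC : IsSCC C) (hnt : ¬ IsTrivialSCC C)
    {p : BExpr Act} (hp : p ∈ C) {q : BExpr Act} (hCq : IsSCC (seqSet C q)) :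
    AliveExit (seqSet C q) (BExpr.seq p q) ↔ AliveExit C p ∧ BNormed q := by
  constructor
  · rintro ⟨-, h⟩
    rcases h with ht | ⟨⟨a, s'⟩, hstep, hout, hnorm⟩
    · cases ht with
      | seq hpt hqt =>
        exact ⟨⟨hp, Or.inl hpt⟩, ⟨q, Relation.ReflTransGen.refl, hqt⟩⟩
    · cases hstep with
      | seql h1 =>
        rename_i p'
        obtain ⟨r, hre, hrt⟩ := hnorm
        obtain ⟨hp'n, hqn⟩ := seq_reach_term hre hrt _ _ rfl
        refine ⟨⟨hp, Or.inr ⟨(a, p'), h1, ?_, hp'n⟩⟩, hqn⟩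
        intro hp'C
        exact hout ⟨p', hp'C, rfl⟩
      | seqr h1 h2 =>
        exact ⟨⟨hp, Or.inl h1⟩,
          bnormed_of_reach (Relation.ReflTransGen.single ⟨a, h2⟩) hnorm⟩
  · rintro ⟨⟨-, halive⟩, hq⟩
    refine ⟨⟨p, hp, rfl⟩, ?_⟩
    rcases halive with hpt | ⟨⟨a, p'⟩, hstep, hout, hnorm⟩
    · by_cases hqt : BTerm q
      · exact Or.inl (BTerm.seq hpt hqt)
      · obtain ⟨r, hqr, hrt⟩ := hq
        rcases hqr.cases_head with rfl | ⟨q₁, ⟨a, hs⟩, hrest⟩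
        · exact absurd hrt hqt
        · refine Or.inr ⟨(a, q₁), BStep.seqr hpt hs, ?_, ⟨r, hrest, hrt⟩⟩
          rintro ⟨p₁, hp₁, rfl⟩
          have h1 : OC (BExpr.seq p₁ q) ≤ OC q := bstep_oc_le hs
          cases hq2 : isStarB q
          · simp only [OC, hq2, Bool.false_eq_true, if_false] at h1; omega
          · cases q <;> simp [isStarB] at hq2
            exact hqt BTerm.star
    · refine Or.inr ⟨(a, BExpr.seq p' q), BStep.seql hstep, ?_, bnormed_seq hnorm hq⟩
      rintro ⟨p'', hp'', heq⟩
      injection heq with h1 h2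
      exact hout (h1 ▸ hp'')
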